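/- For every real a > 0 and every x ∈ (0,1), ∫₀^x t^{2a}/(1-t²)^{a+1} dt ≤ x^{2a+1} / (2a(1-x²)^a). -/

import Mathlib

theorem integral_upper_bound' (a : ℝ) (ha : 0 < a) (x : ℝ) (hx : x ∈ Set.Ioo (0:ℝ) 1) :
    (∫ t in (0:ℝ)..x, t ^ (2 * a) / (1 - t ^ 2) ^ (a + 1)) ≤
      x ^ (2 * a + 1) / (2 * a * (1 - x ^ 2) ^ a) := by
  obtain ⟨hx0, hx1⟩ := hx
  set F : ℝ → ℝ := fun t => t ^ (2 * a + 1) * (1 - t ^ 2) ^ (-a) / (2 * a) with hF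
  set G : ℝ → ℝ := fun t =>
    ((2 * a + 1) * t ^ (2 * a) * (1 - t ^ 2) ^ (-a)
      + t ^ (2 * a + 1) * ((-2 * t) * (-a) * (1 - t ^ 2) ^ (-a - 1))) / (2 * a) with hG
  have hu : ∀ t ∈ Set.Icc (0:ℝ) x, (0:ℝ) < 1 - t ^ 2 := by
    intro t ⟨h0, h1⟩
    nlinarith
  -- derivative
  have hderiv : ∀ t ∈ Set.Icc (0:ℝ) x, HasDerivAt F (G t) t := by
    intro t ht
    have hut := hu t ht
    have h1 : HasDerivAt (fun y : ℝ => y ^ (2 * a + 1)) ((2 * a + 1) * t ^ (2 * a + 1 - 1)) t :=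
      Real.hasDerivAt_rpow_const (Or.inr (by linarith))
    have h2 : HasDerivAt (fun y : ℝ => 1 - y ^ 2) (-2 * t) t := by
      have := ((hasDerivAt_pow 2 t).const_sub 1)
      simpa using this
    have h3 : HasDerivAt (fun y : ℝ => (1 - y ^ 2) ^ (-a))
        ((-2 * t) * (-a) * (1 - t ^ 2) ^ (-a - 1)) t :=
      h2.rpow_const (Or.inl (ne_of_gt hut))
    have h4 := (h1.mul h3).div_const (2 * a)
    convert h4 using 1
    · rfl
    · rfl
    · rfl
    · simp only [hG]
      ring_nf
  -- pointwise inequality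
  have hle : ∀ t ∈ Set.Icc (0:ℝ) x, t ^ (2 * a) / (1 - t ^ 2) ^ (a + 1) ≤ G t := by
    intro t ht
    have hut := hu t ht
    have ht0 : 0 ≤ t := ht.1
    have htp : (0:ℝ) ≤ t ^ (2 * a) := Real.rpow_nonneg ht0 _
    have hq : (0:ℝ) < (1 - t ^ 2) ^ (-a - 1) := Real.rpow_pos_of_pos hut _
    have e3 : t ^ (2 * a + 1) = t ^ (2 * a) * t := by
      rw [Real.rpow_add' ht0 (by linarith), Real.rpow_one]
    have e5 : (1 - t ^ 2) ^ (-a) = (1 - t ^ 2) * (1 - t ^ 2) ^ (-a - 1) := by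
      have h := Real.rpow_add hut 1 (-a - 1)
      rw [Real.rpow_one] at h
      rw [← h]
      norm_num
    have elhs : t ^ (2 * a) / (1 - t ^ 2) ^ (a + 1) = t ^ (2 * a) * (1 - t ^ 2) ^ (-a - 1) := by
      rw [div_eq_mul_inv, ← Real.rpow_neg hut.le, show -(a + 1) = -a - 1 by ring]
    have eG : G t = t ^ (2 * a) * (1 - t ^ 2) ^ (-a - 1) * ((2 * a + 1 - t ^ 2) / (2 * a)) := by
      simp only [hG, e3, e5]
      field_simp
      ring
    rw [elhs, eG]
    have hc : 1 ≤ (2 * a + 1 - t ^ 2) / (2 * a) := by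
      rw [le_div_iff₀ (by linarith)]
      nlinarith
    nlinarith [mul_nonneg htp hq.le]
  -- continuity / integrability
  have hcont2a : ContinuousOn (fun t : ℝ => t ^ (2 * a)) (Set.Icc 0 x) :=
    ContinuousOn.rpow_const continuousOn_id (fun t _ => Or.inr (by positivity))
  have hcontu : ContinuousOn (fun t : ℝ => 1 - t ^ 2) (Set.Icc 0 x) := by fun_prop
  have hcontf : ContinuousOn (fun t : ℝ => t ^ (2 * a) / (1 - t ^ 2) ^ (a + 1)) (Set.Icc 0 x) := by
    apply hcont2a.div (hcontu.rpow_const (fun t ht => Or.inl (ne_of_gt (hu t ht))))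
    intro t ht
    exact ne_of_gt (Real.rpow_pos_of_pos (hu t ht) _)
  have hcontG : ContinuousOn G (Set.Icc 0 x) := by
    apply ContinuousOn.div_const
    apply ContinuousOn.add
    · exact (continuousOn_const.mul hcont2a).mul
        (hcontu.rpow_const (fun t ht => Or.inl (ne_of_gt (hu t ht))))
    · exact (ContinuousOn.rpow_const continuousOn_id (fun t _ => Or.inr (by positivity))).mul
        (((continuousOn_const.mul continuousOn_id).mul continuousOn_const).mul
          (hcontu.rpow_const (fun t ht => Or.inl (ne_of_gt (hu t ht)))))
  have hintf : IntervalIntegrable (fun t : ℝ => t ^ (2 * a) / (1 - t ^ 2) ^ (a + 1))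
      MeasureTheory.volume 0 x := by
    apply ContinuousOn.intervalIntegrable
    rwa [Set.uIcc_of_le hx0.le]
  have hintG : IntervalIntegrable G MeasureTheory.volume 0 x := by
    apply ContinuousOn.intervalIntegrable
    rwa [Set.uIcc_of_le hx0.le]
  have h1 : (∫ t in (0:ℝ)..x, t ^ (2 * a) / (1 - t ^ 2) ^ (a + 1)) ≤ ∫ t in (0:ℝ)..x, G t :=
    intervalIntegral.integral_mono_on hx0.le hintf hintG hle
  have h2 : (∫ t in (0:ℝ)..x, G t) = F x - F 0 := by
    apply intervalIntegral.integral_eq_sub_of_hasDerivAt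
    · intro t ht
      rw [Set.uIcc_of_le hx0.le] at ht
      exact hderiv t ht
    · exact hintG
  have hF0 : F 0 = 0 := by
    simp only [hF]
    rw [Real.zero_rpow (by linarith)]
    ring
  have hFx : F x = x ^ (2 * a + 1) / (2 * a * (1 - x ^ 2) ^ a) := by
    have hux : (0:ℝ) < 1 - x ^ 2 := by nlinarith
    have hpa : (0:ℝ) < (1 - x ^ 2) ^ a := Real.rpow_pos_of_pos hux a
    simp only [hF]
    rw [Real.rpow_neg hux.le, eq_div_iff (by positivity)]
    field_simp
  rw [h2, hF0, sub_zero, hFx] at h1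
  exact h1
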